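/- Let Q be a simple binary join query with input size m, λ ∈ [1, m] an integer, H ⊆ attset(Q), L = attset(Q) \ H, and I the set of isolated attributes. For every configuration η ∈ config(Q, H), Join(Q'(η)) = Join(Q''(η)) = Join(Q''_isolated(η)) × Join(Q''_light(η)), where the right-hand side denotes the set of tuples over L obtained by combining a tuple of Join(Q''_isolated(η)) (over I) with a tuple of Join(Q''_light(η)) (over L \ I). -/
import Mathlib


open scoped BigOperators Classical

namespace BinaryJoins

/-! ### Hypergraphs, fractional edge coverings and packings

A hypergraph is given by a finite vertex set `V : Finset α` and a finite
edge set `E : Finset (Finset α)`.  A weight assignment is a function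
`W : Finset α → ℝ` (only its values on `E` matter). -/

variable {α : Type} [DecidableEq α]

/-- The weight of a vertex `X`: the sum of the weights of all edges incident to `X`. -/
def vertexWeight (E : Finset (Finset α)) (W : Finset α → ℝ) (X : α) : ℝ :=
  ∑ e ∈ E.filter (fun e => X ∈ e), W e

/-- `W` is a fractional edge covering: edge weights lie in `[0,1]` and every
vertex of `V` has weight at least 1. -/
def IsFracEdgeCover (V : Finset α) (E : Finset (Finset α)) (W : Finset α → ℝ) : Prop :=
  (∀ e ∈ E, 0 ≤ W e ∧ W e ≤ 1) ∧ ∀ X ∈ V, 1 ≤ vertexWeight E W X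

/-- `W` is a fractional edge packing: edge weights lie in `[0,1]` and every
vertex of `V` has weight at most 1. -/
def IsFracEdgePack (V : Finset α) (E : Finset (Finset α)) (W : Finset α → ℝ) : Prop :=
  (∀ e ∈ E, 0 ≤ W e ∧ W e ≤ 1) ∧ ∀ X ∈ V, vertexWeight E W X ≤ 1

/-- The fractional edge covering number `ρ`: the smallest total weight of a
fractional edge covering. -/
noncomputable def rho (V : Finset α) (E : Finset (Finset α)) : ℝ :=
  sInf {t | ∃ W : Finset α → ℝ, IsFracEdgeCover V E W ∧ t = ∑ e ∈ E, W e}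

/-- The fractional edge packing number `τ`: the largest total weight of a
fractional edge packing. -/
noncomputable def tau (V : Finset α) (E : Finset (Finset α)) : ℝ :=
  sSup {t | ∃ W : Finset α → ℝ, IsFracEdgePack V E W ∧ t = ∑ e ∈ E, W e}

/-- A binary hypergraph: every edge is a 2-element subset of `V`, and every
vertex is incident to at least one edge. -/
def BinaryHG (V : Finset α) (E : Finset (Finset α)) : Prop :=
  (∀ e ∈ E, e ⊆ V ∧ e.card = 2) ∧ ∀ X ∈ V, ∃ e ∈ E, X ∈ e


/-! ### Tuples, relations, and join queries

`dom` is the domain of values; a tuple over a set `U` of attributes is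
represented as a function `att → Option dom` that is `some`-valued exactly
on `U`. -/

variable {att dom : Type}

/-- A (partial) tuple. -/
abbrev Tup (att dom : Type) := att → Option dom

/-- `u` is a tuple over the attribute set `U`. -/
def IsTupleOn (u : Tup att dom) (U : Set att) : Prop :=
  ∀ x : att, (u x).isSome ↔ x ∈ U

/-- The projection (restriction) of a tuple on an attribute set `V`. -/
noncomputable def restrict (u : Tup att dom) (V : Set att) : Tup att dom :=
  fun x => if x ∈ V then u x else none

/-- A relation: a finite set of tuples over a common scheme. -/
structure Relation (att dom : Type) where
  scheme : Finset att
  tuples : Set (Tup att dom)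
  finite : tuples.Finite
  wf : ∀ u ∈ tuples, IsTupleOn u ↑scheme

variable [DecidableEq att]

/-- A join query is a finite set of relations; `attset Q` is the set of all
attributes appearing in the schemes of its relations. -/
def attset (Q : Finset (Relation att dom)) : Finset att :=
  Q.biUnion fun R => R.scheme

/-- The result `Join(Q)` of a join query. -/
def JoinQ (Q : Finset (Relation att dom)) : Set (Tup att dom) :=
  { u | IsTupleOn u ↑(attset Q) ∧ ∀ R ∈ Q, restrict u ↑R.scheme ∈ R.tuples }

/-- A query is simple if no two distinct relations share a scheme. -/
def SimpleQ (Q : Finset (Relation att dom)) : Prop :=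
  ∀ R ∈ Q, ∀ S ∈ Q, R.scheme = S.scheme → R = S

/-- A query is binary if every relation's scheme has exactly two attributes. -/
def BinaryQ (Q : Finset (Relation att dom)) : Prop :=
  ∀ R ∈ Q, R.scheme.card = 2

/-- The input size `m` of a query. -/
noncomputable def inputSize (Q : Finset (Relation att dom)) : ℕ :=
  ∑ R ∈ Q, R.tuples.ncard

/-- The edge set of the hypergraph defined by `Q` (its vertex set is `attset Q`). -/
def edgeSet (Q : Finset (Relation att dom)) : Finset (Finset att) :=
  Q.image fun R => R.scheme

/-! ### Heavy and light values -/

/-- Value `x` is heavy on attribute `X`: some relation of `Q` has at least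
`m/λ` tuples carrying `x` on `X`. -/
def HeavyOn (Q : Finset (Relation att dom)) (lam : ℕ) (X : att) (x : dom) : Prop :=
  ∃ R ∈ Q, X ∈ R.scheme ∧
    (inputSize Q : ℝ) / (lam : ℝ) ≤ ({u ∈ R.tuples | u X = some x}.ncard : ℝ)

/-- Value `x` is heavy (on some attribute). -/
def Heavy (Q : Finset (Relation att dom)) (lam : ℕ) (x : dom) : Prop :=
  ∃ X : att, HeavyOn Q lam X x

/-- Value `x` appears in at least one relation of `Q`. -/
def Appears (Q : Finset (Relation att dom)) (x : dom) : Prop :=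
  ∃ R ∈ Q, ∃ X ∈ R.scheme, ∃ u ∈ R.tuples, u X = some x

/-- Value `x` appears on attribute `Y` in a relation of `Q`. -/
def AppearsOn (Q : Finset (Relation att dom)) (Y : att) (x : dom) : Prop :=
  ∃ R ∈ Q, Y ∈ R.scheme ∧ ∃ u ∈ R.tuples, u Y = some x

/-! ### Configurations and residual queries

Below, `Hv : att → dom → Prop` is the "heavy" predicate (`Hv X x` meaning
that value `x` is heavy on attribute `X`); in applications it is
instantiated with `HeavyOn Q lam`. -/

/-- The set `config(Q, H)` of configurations of `H`: tuples over `H` whose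
values are heavy. -/
def config (Hv : att → dom → Prop) (H : Finset att) : Set (Tup att dom) :=
  { η | IsTupleOn η ↑H ∧ ∀ X ∈ H, ∀ x : dom, η X = some x → Hv X x }

/-- The residual relation `R'ₑ(η)` (over `e \ H`) of the relation `R` with
scheme `e`, under configuration `η` of `H`: projections on `e \ H` of the
tuples of `R` that agree with `η` on `e ∩ H` and are light outside `H`. -/
def ResidualTuples (Q : Finset (Relation att dom)) (Hv : att → dom → Prop)
    (H : Finset att) (η : Tup att dom) (R : Relation att dom) : Set (Tup att dom) :=
  { v | ∃ w ∈ R.tuples,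
      (∀ X ∈ R.scheme ∩ H, w X = η X) ∧
      (∀ Y ∈ R.scheme \ H, ∀ y : dom, w Y = some y → ¬ Hv Y y ∧ Appears Q y) ∧
      v = restrict w ↑(R.scheme \ H) }

/-- The result of the residual query `Q'(η)`: tuples over `attset Q \ H`
whose projection on each active edge `e` belongs to `R'ₑ(η)`. -/
def JoinResidual (Q : Finset (Relation att dom)) (Hv : att → dom → Prop)
    (H : Finset att) (η : Tup att dom) : Set (Tup att dom) :=
  { u | IsTupleOn u ↑(attset Q \ H) ∧
      ∀ R ∈ Q, (R.scheme \ H).Nonempty →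
        restrict u ↑(R.scheme \ H) ∈ ResidualTuples Q Hv H η R }

/-- `m_η`: the total size of the relations of the residual query `Q'(η)`. -/
noncomputable def residualSize (Q : Finset (Relation att dom)) (Hv : att → dom → Prop)
    (H : Finset att) (η : Tup att dom) : ℕ :=
  ∑ R ∈ Q, if (R.scheme \ H).Nonempty then (ResidualTuples Q Hv H η R).ncard else 0

/-- Combine a tuple over a set disjoint from `H` with a configuration `η` over `H`. -/
def combine (H : Finset att) (η u : Tup att dom) : Tup att dom :=
  fun x => if x ∈ H then η x else u x

/-! ### Cross edges, isolated attributes, and the semi-join reduction -/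

/-- `e` is a cross edge w.r.t. `H`: it meets both `H` and its complement. -/
def IsCross (H : Finset att) (e : Finset att) : Prop :=
  (e ∩ H).Nonempty ∧ (e \ H).Nonempty

/-- The set `I` of isolated attributes: light attributes `X` such that `{X}`
is the only edge incident to `X` in the subgraph induced by the light
attributes `L = attset Q \ H`. -/
def isolatedSet (Q : Finset (Relation att dom)) (H : Finset att) : Finset att :=
  (attset Q \ H).filter fun X => ∀ R ∈ Q, X ∈ R.scheme → R.scheme \ H = {X}

/-- The unary tuple over `{X}` carrying value `x`. -/
def singletonTup (X : att) (x : dom) : Tup att dom :=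
  fun Y => if Y = X then some x else none

/-- `X` is a border attribute: a light attribute appearing in a cross edge. -/
def BorderAttr (Q : Finset (Relation att dom)) (H : Finset att) (X : att) : Prop :=
  X ∈ attset Q ∧ X ∉ H ∧ ∃ R ∈ Q, X ∈ R.scheme ∧ IsCross H R.scheme

/-- The set of values of the unary relation `R''_X(η)`: the intersection of
the residual relations `R'ₑ(η)` over all cross edges `e` containing `X`. -/
def Rpp (Q : Finset (Relation att dom)) (Hv : att → dom → Prop)
    (H : Finset att) (η : Tup att dom) (X : att) : Set dom :=
  { x | ∀ R ∈ Q, IsCross H R.scheme → X ∈ R.scheme →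
      singletonTup X x ∈ ResidualTuples Q Hv H η R }

/-- The cartesian product `Join(Q''_J(η))` of the unary relations `R''_X(η)`,
`X ∈ J` (for `J = I` this is `Join(Q''_isolated(η))`). -/
def JoinIso (Q : Finset (Relation att dom)) (Hv : att → dom → Prop)
    (H : Finset att) (η : Tup att dom) (J : Finset att) : Set (Tup att dom) :=
  { u | IsTupleOn u ↑J ∧ ∀ X ∈ J, ∀ x : dom, u X = some x → x ∈ Rpp Q Hv H η X }

/-! ### The query `Q*` and its hypergraph -/

/-- The result `Join(Q*)` of the query `Q*`: tuples over `I ∪ H` that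
(i) project into `R_e` for every cross edge `e` incident to `I`, (ii) take a
heavy value on every attribute of `H`, and (iii) take, on every `Y ∈ I`, a
value appearing on `Y` in a relation of `Q`. -/
def JoinStar (Q : Finset (Relation att dom)) (Hv : att → dom → Prop)
    (H : Finset att) : Set (Tup att dom) :=
  { t | IsTupleOn t ↑(isolatedSet Q H ∪ H) ∧
      (∀ R ∈ Q, IsCross H R.scheme → (R.scheme ∩ isolatedSet Q H).Nonempty →
        restrict t ↑R.scheme ∈ R.tuples) ∧
      (∀ X ∈ H, ∀ x : dom, t X = some x → Hv X x) ∧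
      (∀ Y ∈ isolatedSet Q H, ∀ y : dom, t Y = some y → AppearsOn Q Y y) }

/-- The edge set `E*` of the hypergraph `G*` of `Q*`: the cross edges of `G`
incident to `I`, a unary edge `{X}` for each `X ∈ H`, and a unary edge `{Y}`
for each `Y ∈ I`.  (Its vertex set is `V* = I ∪ H`.) -/
noncomputable def starEdges (Q : Finset (Relation att dom)) (H : Finset att) :
    Finset (Finset att) :=
  (edgeSet Q).filter (fun e => IsCross H e ∧ (e ∩ isolatedSet Q H).Nonempty)
    ∪ H.image (fun X => {X}) ∪ (isolatedSet Q H).image (fun Y => {Y})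

/-! ### The reduced query `Q''(η)` -/

/-- The reduced relation `R''ₑ(η)` of a light edge `e = scheme R`: the tuples
of `R'ₑ(η)` whose values on border attributes survive the semi-join
reduction. -/
def ReducedTuples (Q : Finset (Relation att dom)) (Hv : att → dom → Prop)
    (H : Finset att) (η : Tup att dom) (R : Relation att dom) : Set (Tup att dom) :=
  { u | u ∈ ResidualTuples Q Hv H η R ∧
      ∀ X ∈ R.scheme, BorderAttr Q H X → ∀ x : dom, u X = some x → x ∈ Rpp Q Hv H η X }

/-- The result `Join(Q''_light(η))`: tuples over `L \ I` whose projection on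
every light edge belongs to the corresponding reduced relation. -/
def JoinLight (Q : Finset (Relation att dom)) (Hv : att → dom → Prop)
    (H : Finset att) (η : Tup att dom) : Set (Tup att dom) :=
  { u | IsTupleOn u ↑((attset Q \ H) \ isolatedSet Q H) ∧
      ∀ R ∈ Q, R.scheme ∩ H = ∅ → restrict u ↑R.scheme ∈ ReducedTuples Q Hv H η R }

/-- The result `Join(Q''(η))` of the reduced query: tuples over `L` whose
projections on light edges are in the reduced relations and whose values on
isolated attributes are in the corresponding unary relations. -/
def JoinReduced (Q : Finset (Relation att dom)) (Hv : att → dom → Prop)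
    (H : Finset att) (η : Tup att dom) : Set (Tup att dom) :=
  { u | IsTupleOn u ↑(attset Q \ H) ∧
      (∀ R ∈ Q, R.scheme ∩ H = ∅ → restrict u ↑R.scheme ∈ ReducedTuples Q Hv H η R) ∧
      (∀ X ∈ isolatedSet Q H, ∀ x : dom, u X = some x → x ∈ Rpp Q Hv H η X) }


/-! ### Auxiliary lemmas -/

lemma restrict_apply_mem (u : Tup att dom) (V : Set att) {x : att} (hx : x ∈ V) :
    restrict u V x = u x := if_pos hx

lemma restrict_apply_not_mem (u : Tup att dom) (V : Set att) {x : att} (hx : x ∉ V) :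
    restrict u V x = none := if_neg hx

lemma restrict_singleton (u : Tup att dom) (X : att) (x : dom) (h : u X = some x) :
    restrict u ↑({X} : Finset att) = singletonTup X x := by
  funext Y
  by_cases hY : Y = X
  · subst hY; simp [restrict, singletonTup, h]
  · simp [restrict, singletonTup, hY]

lemma mem_attset {Q : Finset (Relation att dom)} {R : Relation att dom}
    (hR : R ∈ Q) {X : att} (hX : X ∈ R.scheme) : X ∈ attset Q :=
  Finset.mem_biUnion.2 ⟨R, hR, hX⟩

lemma sdiff_of_inter_empty {s t : Finset att} (h : s ∩ t = ∅) : s \ t = s := by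
  ext x
  simp only [Finset.mem_sdiff, and_iff_left_iff_imp]
  intro hx hxt
  have : x ∈ s ∩ t := Finset.mem_inter.2 ⟨hx, hxt⟩
  simp [h] at this

lemma cross_sdiff {Q : Finset (Relation att dom)} (hB : BinaryQ Q)
    {R : Relation att dom} (hR : R ∈ Q) {H : Finset att}
    (hc : (R.scheme ∩ H).Nonempty) {X : att} (hX : X ∈ R.scheme) (hXH : X ∉ H) :
    R.scheme \ H = {X} := by
  obtain ⟨Y, hY⟩ := hc
  rw [Finset.mem_inter] at hY
  have hXY : X ≠ Y := fun h => hXH (h ▸ hY.2)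
  have hsub : ({X, Y} : Finset att) ⊆ R.scheme := by
    intro z hz
    rcases Finset.mem_insert.1 hz with h | h
    · exact h ▸ hX
    · exact (Finset.mem_singleton.1 h) ▸ hY.1
  have hscheme : ({X, Y} : Finset att) = R.scheme :=
    Finset.eq_of_subset_of_card_le hsub
      (by rw [hB R hR, Finset.card_insert_of_notMem (by simp [hXY]), Finset.card_singleton])
  rw [← hscheme]
  ext z
  simp only [Finset.mem_sdiff, Finset.mem_insert, Finset.mem_singleton]
  constructor
  · rintro ⟨h1 | h1, h2⟩
    · exact h1
    · exact absurd (h1 ▸ hY.2) h2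
  · rintro rfl; exact ⟨Or.inl rfl, hXH⟩

lemma isTupleOn_restrict {u : Tup att dom} {U V : Set att} (h : IsTupleOn u U) (hV : V ⊆ U) :
    IsTupleOn (restrict u V) V := by
  intro x
  by_cases hx : x ∈ V
  · rw [restrict_apply_mem u V hx]
    simp [hx, (h x).2 (hV hx)]
  · rw [restrict_apply_not_mem u V hx]
    simp [hx]

lemma light_attr_mem {Q : Finset (Relation att dom)} (hB : BinaryQ Q) {R : Relation att dom}
    (hR : R ∈ Q) {H : Finset att} (hRH : R.scheme ∩ H = ∅)
    {x : att} (hx : x ∈ R.scheme) : x ∈ (attset Q \ H) \ isolatedSet Q H := by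
  have hxH : x ∉ H := fun h => by
    have : x ∈ R.scheme ∩ H := Finset.mem_inter.2 ⟨hx, h⟩
    simp [hRH] at this
  refine Finset.mem_sdiff.2 ⟨Finset.mem_sdiff.2 ⟨mem_attset hR hx, hxH⟩, ?_⟩
  intro hI
  have h1 := (Finset.mem_filter.1 hI).2 R hR hx
  rw [sdiff_of_inter_empty hRH] at h1
  have h2 := congrArg Finset.card h1
  rw [hB R hR] at h2
  simp at h2

/-- For a simple binary join query `Q` with input size
`m`, `λ ∈ [1, m]`, `H ⊆ attset Q` and any configuration
`η ∈ config(Q, H)`: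
`Join(Q'(η)) = Join(Q''(η)) = Join(Q''_isolated(η)) × Join(Q''_light(η))`,
where the last set consists of the tuples over `L` combining a tuple of
`Join(Q''_isolated(η))` (over `I`) with a tuple of `Join(Q''_light(η))`
(over `L \ I`). -/
theorem residual_eq_reduced_eq_product [Finite att] [Countable dom] [Infinite dom]
    (Q : Finset (Relation att dom)) (hS : SimpleQ Q) (hB : BinaryQ Q)
    (lam : ℕ) (hlam1 : 1 ≤ lam) (hlam2 : lam ≤ inputSize Q)
    (H : Finset att) (hH : H ⊆ attset Q)
    (η : Tup att dom) (hη : η ∈ config (HeavyOn Q lam) H) :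
    JoinResidual Q (HeavyOn Q lam) H η = JoinReduced Q (HeavyOn Q lam) H η ∧
    JoinReduced Q (HeavyOn Q lam) H η
      = { t : Tup att dom |
          ∃ u ∈ JoinIso Q (HeavyOn Q lam) H η (isolatedSet Q H),
            ∃ v ∈ JoinLight Q (HeavyOn Q lam) H η,
              t = fun x => if x ∈ isolatedSet Q H then u x else v x } := by
  set Hv := HeavyOn Q lam with hHv
  constructor
  · -- Join(Q'(η)) = Join(Q''(η))
    ext u
    simp only [JoinResidual, JoinReduced, Set.mem_setOf_eq]
    constructor
    · rintro ⟨h1, h2⟩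
      refine ⟨h1, ?_, ?_⟩
      · intro R hR hRH
        have hsd : R.scheme \ H = R.scheme := sdiff_of_inter_empty hRH
        have hne : (R.scheme \ H).Nonempty := by
          rw [hsd]; exact Finset.card_pos.1 (by rw [hB R hR]; norm_num)
        have hmem := h2 R hR hne
        rw [hsd] at hmem
        refine ⟨hmem, ?_⟩
        intro X hX hb x hx
        have hux : u X = some x := by
          rwa [restrict_apply_mem u _ (Finset.mem_coe.mpr hX)] at hx
        intro R' hR' hc' hX'
        have hset := cross_sdiff hB hR' hc'.1 hX' hb.2.1
        have hm := h2 R' hR' (by rw [hset]; exact Finset.singleton_nonempty X)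
        rwa [hset, restrict_singleton u X x hux] at hm
      · intro X hX x hx
        have hXL := (Finset.mem_filter.1 hX).1
        have hXH : X ∉ H := (Finset.mem_sdiff.1 hXL).2
        intro R' hR' hc' hX'
        have hset := cross_sdiff hB hR' hc'.1 hX' hXH
        have hm := h2 R' hR' (by rw [hset]; exact Finset.singleton_nonempty X)
        rwa [hset, restrict_singleton u X x hx] at hm
    · rintro ⟨h1, h2, h3⟩
      refine ⟨h1, ?_⟩
      intro R hR hne
      by_cases hRH : R.scheme ∩ H = ∅
      · rw [sdiff_of_inter_empty hRH]
        exact (h2 R hR hRH).1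
      · obtain ⟨X, hXmem⟩ := hne
        have hX : X ∈ R.scheme := (Finset.mem_sdiff.1 hXmem).1
        have hXH : X ∉ H := (Finset.mem_sdiff.1 hXmem).2
        have hcross : (R.scheme ∩ H).Nonempty := Finset.nonempty_iff_ne_empty.2 hRH
        have hset := cross_sdiff hB hR hcross hX hXH
        have hXA : X ∈ attset Q \ H := Finset.mem_sdiff.2 ⟨mem_attset hR hX, hXH⟩
        have hsome : (u X).isSome := (h1 X).2 (Finset.mem_coe.mpr hXA)
        obtain ⟨x, hux⟩ := Option.isSome_iff_exists.1 hsome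
        rw [hset, restrict_singleton u X x hux]
        have hxRpp : x ∈ Rpp Q Hv H η X := by
          by_cases hXI : X ∈ isolatedSet Q H
          · exact h3 X hXI x hux
          · have hnotall : ¬ ∀ R₀ ∈ Q, X ∈ R₀.scheme → R₀.scheme \ H = {X} := by
              intro hall; exact hXI (Finset.mem_filter.2 ⟨hXA, hall⟩)
            push_neg at hnotall
            obtain ⟨R₀, hR₀, hXR₀, hne₀⟩ := hnotall
            have hR₀H : R₀.scheme ∩ H = ∅ := by
              by_contra hcon
              exact hne₀ (cross_sdiff hB hR₀ (Finset.nonempty_iff_ne_empty.2 hcon) hXR₀ hXH)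
            have hred := h2 R₀ hR₀ hR₀H
            have hb : BorderAttr Q H X :=
              ⟨mem_attset hR hX, hXH, R, hR, hX, hcross, ⟨X, hXmem⟩⟩
            exact hred.2 X hXR₀ hb x
              (by rw [restrict_apply_mem u _ (Finset.mem_coe.mpr hXR₀)]; exact hux)
        exact hxRpp R hR ⟨hcross, ⟨X, hXmem⟩⟩ hX
  · -- Join(Q''(η)) = product
    ext t
    simp only [JoinReduced, Set.mem_setOf_eq]
    constructor
    · rintro ⟨h1, h2, h3⟩
      have hIsub : (↑(isolatedSet Q H) : Set att) ⊆ ↑(attset Q \ H) := by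
        intro x hx
        exact Finset.mem_coe.mpr ((Finset.mem_filter.1 (Finset.mem_coe.1 hx)).1)
      have hLsub : (↑((attset Q \ H) \ isolatedSet Q H) : Set att) ⊆ ↑(attset Q \ H) := by
        intro x hx
        exact Finset.mem_coe.mpr ((Finset.mem_sdiff.1 (Finset.mem_coe.1 hx)).1)
      refine ⟨restrict t ↑(isolatedSet Q H), ⟨isTupleOn_restrict h1 hIsub, ?_⟩,
        restrict t ↑((attset Q \ H) \ isolatedSet Q H),
        ⟨isTupleOn_restrict h1 hLsub, ?_⟩, ?_⟩
      · intro X hX x hx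
        rw [restrict_apply_mem t _ (Finset.mem_coe.mpr hX)] at hx
        exact h3 X hX x hx
      · intro R hR hRH
        have heq : restrict (restrict t ↑((attset Q \ H) \ isolatedSet Q H)) ↑R.scheme
            = restrict t ↑R.scheme := by
          funext y
          by_cases hy : y ∈ (↑R.scheme : Set att)
          · rw [restrict_apply_mem _ _ hy, restrict_apply_mem _ _ hy]
            exact restrict_apply_mem t _
              (Finset.mem_coe.mpr (light_attr_mem hB hR hRH (Finset.mem_coe.1 hy)))
          · rw [restrict_apply_not_mem _ _ hy, restrict_apply_not_mem _ _ hy]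
        rw [heq]
        exact h2 R hR hRH
      · funext x
        by_cases hx : x ∈ isolatedSet Q H
        · rw [if_pos hx, restrict_apply_mem t _ (Finset.mem_coe.mpr hx)]
        · rw [if_neg hx]
          by_cases hx2 : x ∈ attset Q \ H
          · rw [restrict_apply_mem t _
              (Finset.mem_coe.mpr (Finset.mem_sdiff.2 ⟨hx2, hx⟩))]
          · rw [restrict_apply_not_mem t _
              (by intro hc; exact hx2 (Finset.mem_sdiff.1 (Finset.mem_coe.1 hc)).1)]
            rcases h : t x with _ | y
            · rfl
            · exact absurd (Finset.mem_coe.1 ((h1 x).1 (by simp [h]))) hx2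
    · rintro ⟨u, ⟨hu1, hu2⟩, v, ⟨hv1, hv2⟩, rfl⟩
      refine ⟨?_, ?_, ?_⟩
      · intro x
        by_cases hx : x ∈ isolatedSet Q H
        · simp only [hx, if_pos]
          have hxA : x ∈ attset Q \ H := (Finset.mem_filter.1 hx).1
          constructor
          · intro _; exact Finset.mem_coe.mpr hxA
          · intro _; exact (hu1 x).2 (Finset.mem_coe.mpr hx)
        · simp only [if_neg hx]
          rw [hv1 x]
          simp only [Finset.coe_sdiff, Set.mem_diff, Finset.mem_coe]
          constructor
          · rintro ⟨h, _⟩; exact h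
          · intro h; exact ⟨h, fun hc => hx (Finset.mem_coe.1 hc)⟩
      · intro R hR hRH
        have heq : restrict (fun x => if x ∈ isolatedSet Q H then u x else v x) ↑R.scheme
            = restrict v ↑R.scheme := by
          funext y
          by_cases hy : y ∈ (↑R.scheme : Set att)
          · rw [restrict_apply_mem _ _ hy, restrict_apply_mem _ _ hy]
            have hyI : y ∉ isolatedSet Q H :=
              (Finset.mem_sdiff.1 (light_attr_mem hB hR hRH (Finset.mem_coe.1 hy))).2
            simp [hyI]
          · rw [restrict_apply_not_mem _ _ hy, restrict_apply_not_mem _ _ hy]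
        rw [heq]
        exact hv2 R hR hRH
      · intro X hX x hx
        simp only [if_pos hX] at hx
        exact hu2 X hX x hx

end BinaryJoins
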